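/- For the connection ρ(T_ν) = Σ_μ b_μ* L_{μ,ν} on the instanton bundle, the horizontal lifts satisfy [ρ(T_μ), ρ(T_ν)] = L_{μ,ν}, and consequently the curvature on the generators is −Ω(T_μ, T_ν) = ω(L_{μ,ν}) = L_{μ,ν} − (b_μ ρ(T_ν) − λ^{2μ∧ν} b_ν ρ(T_μ)) = Y_{μ,ν}, the generators of the braided Lie algebra of vertical (gauge) derivations. -/

import Mathlib

/-!
STATEMENT 9: for the connection `ρ(T_ν) = Σ_μ b_μ* L_{μ,ν}` on the instanton
bundle `O(S^4_θ) ⊂ O(S^7_θ)`, the horizontal lifts satisfy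
`[ρ(T_μ), ρ(T_ν)] = L_{μ,ν}`, and consequently the curvature on the generators
is `−Ω(T_μ, T_ν) = ω(L_{μ,ν}) = L_{μ,ν} − (b_μ ρ(T_ν) − λ^{2μ∧ν} b_ν ρ(T_μ))
= Y_{μ,ν}`, the generators of the braided Lie algebra of vertical (gauge)
derivations.

`O(S^7_θ)` is modelled as a `ℂ`-algebra `A`, graded by the (doubled) torus
weight lattice `ℤ × ℤ`; the coinvariant subalgebra `O(S^4_θ)` is generated by
the `b_μ`, `μ ∈ V = {(0,0),(±1,0),(0,±1)}` (of weight `2μ`), with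
`b_μ ∙ b_ν = λ^{2μ∧ν} b_ν ∙ b_μ` and `Σ_μ b_μ* ∙ b_μ = Σ_μ b_{−μ} ∙ b_μ = 1`.
The `O(SU(2))`-equivariant braided derivations `L_{μ,ν} = −λ^{2μ∧ν} L_{ν,μ}`
satisfy the `so_θ(5)` relations and restrict to
`L^π_{μ,ν}(b_σ) = b_μ δ_{ν*σ} − λ^{2μ∧ν} b_ν δ_{μ*σ}`.  The connection is
`ρ(T_ν) := Σ_μ b_μ* L_{μ,ν}` (`rhoT` below); the vertical projection is
`ω(L) := L − ρ(L^π)`; the curvature is `Ω(X,X') = ρ([X,X']) − ⟦ρ,ρ⟧(X,X')`,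
and for the equivariant connection `ρ`, `⟦ρ,ρ⟧(T_μ,T_ν)` is the braided
commutator `ρ(T_μ)∘ρ(T_ν) − λ^{2μ∧ν} ρ(T_ν)∘ρ(T_μ)` while
`ρ([T_μ,T_ν]) = b_μ ρ(T_ν) − λ^{2μ∧ν} b_ν ρ(T_μ)`; finally
`Y_{μ,ν} := Σ_γ b_γ* ∙ (b_γ L_{μ,ν} − λ^{−2μ∧γ} b_μ L_{γ,ν}
  + λ^{−2ν∧(γ+μ)} b_ν L_{γ,μ})`.
-/

noncomputable section

open scoped BigOperators

namespace Statement9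

/-- the five weights `{(0,0),(±1,0),(0,±1)}` -/
def V : Finset (ℤ × ℤ) := {(0,0), (1,0), (-1,0), (0,1), (0,-1)}

/-- `μ∧ν := μ₁ν₂ − μ₂ν₁` -/
def wedge (p r : ℤ × ℤ) : ℤ := p.1 * r.2 - p.2 * r.1

/-- `λ^{2 μ∧ν}` with `λ = e^{−πiθ}` -/
def q (θ : ℝ) (p r : ℤ × ℤ) : ℂ :=
  Complex.exp (-((Real.pi : ℂ) * Complex.I) * (θ : ℂ) * ((2 * wedge p r : ℤ) : ℂ))

/-- the doubled weight `2μ` (the generators `z_r` of `O(S^7_θ)` have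
half-integral weights, so the grading uses doubled weights) -/
def dbl (p : ℤ × ℤ) : ℤ × ℤ := (2 * p.1, 2 * p.2)

/-- the braiding factor between homogeneous elements of (doubled) weights
`m`, `m'`; on the subalgebra `O(S^4_θ)`, `Q7 θ (dbl μ) (dbl ν) = λ^{2μ∧ν}`. -/
def Q7 (θ : ℝ) (m m' : ℤ × ℤ) : ℂ :=
  Complex.exp (-((Real.pi : ℂ) * Complex.I) * (θ : ℂ) * (((wedge m m' : ℤ) : ℂ) / 2))


lemma V_neg : ∀ μ ∈ V, -μ ∈ V := by decide

/-- exponential helper: `E θ n = λ^{2n}` -/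
def E (θ : ℝ) (n : ℤ) : ℂ :=
  Complex.exp (-((Real.pi : ℂ) * Complex.I) * (θ : ℂ) * ((2 * n : ℤ) : ℂ))

lemma q_eq_E (θ : ℝ) (p r : ℤ × ℤ) : q θ p r = E θ (wedge p r) := rfl

lemma E_mul (θ : ℝ) (m n : ℤ) : E θ m * E θ n = E θ (m + n) := by
  simp only [E, ← Complex.exp_add]
  congr 1
  push_cast
  ring

lemma E_eq_one {θ : ℝ} {n : ℤ} (h : n = 0) : E θ n = 1 := by
  simp [E, h]

lemma q_congr {θ : ℝ} {p r p' r' : ℤ × ℤ} (h : wedge p r = wedge p' r') :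
    q θ p r = q θ p' r' := by
  unfold q; rw [h]

lemma Q7_dbl (θ : ℝ) (p r s : ℤ × ℤ) : Q7 θ (dbl p + dbl r) (dbl s) = q θ (p + r) s := by
  unfold Q7 q dbl wedge
  simp only [Prod.fst_add, Prod.snd_add]
  congr 1
  push_cast
  ring

section SumHelpers
variable {M : Type*} [AddCommGroup M] [Module ℂ M] {ι : Type*} [DecidableEq ι]

lemma sum_delta (s : Finset ι) {a : ι} (ha : a ∈ s) (g : ι → M) :
    (∑ x ∈ s, (if x = a then (1:ℂ) else 0) • g x) = g a := by
  simp only [ite_smul, one_smul, zero_smul]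
  rw [Finset.sum_ite_eq' s a g]
  exact if_pos ha

lemma sum_delta_mul (s : Finset ι) {a : ι} (ha : a ∈ s) (c : ι → ℂ) (g : ι → M) :
    (∑ x ∈ s, (c x * if x = a then (1:ℂ) else 0) • g x) = c a • g a := by
  simp only [mul_ite, mul_one, mul_zero, ite_smul, zero_smul]
  rw [Finset.sum_ite_eq' s a fun x => c x • g x]
  exact if_pos ha

set_option linter.unusedSectionVars false in
lemma sum_antisym (s : Finset ι) (f : ι → ι → M)
    (h : ∀ a ∈ s, ∀ b ∈ s, f b a = -f a b) :
    (∑ a ∈ s, ∑ b ∈ s, f a b) = 0 := by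
  have h2 : (∑ a ∈ s, ∑ b ∈ s, f a b) = -(∑ a ∈ s, ∑ b ∈ s, f a b) := by
    calc (∑ a ∈ s, ∑ b ∈ s, f a b) = ∑ b ∈ s, ∑ a ∈ s, f a b := Finset.sum_comm
      _ = ∑ a ∈ s, ∑ b ∈ s, -(f a b) := by
          refine Finset.sum_congr rfl fun a ha => Finset.sum_congr rfl fun b hb => (h a ha b hb)
      _ = -(∑ a ∈ s, ∑ b ∈ s, f a b) := by simp
  have h3 : (2:ℂ) • (∑ a ∈ s, ∑ b ∈ s, f a b) = 0 := by
    rw [two_smul]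
    exact eq_neg_iff_add_eq_zero.mp h2
  have h4 : (∑ a ∈ s, ∑ b ∈ s, f a b)
      = (2:ℂ)⁻¹ • ((2:ℂ) • (∑ a ∈ s, ∑ b ∈ s, f a b)) := by
    rw [smul_smul]; norm_num
  rw [h4, h3, smul_zero]

end SumHelpers

section MLHelpers
variable {A : Type*} [Ring A] [Algebra ℂ A]

lemma mLmul (x y : A) :
    LinearMap.mulLeft ℂ (x * y) = LinearMap.mulLeft ℂ x * LinearMap.mulLeft ℂ y :=
  LinearMap.ext fun z => mul_assoc x y z

lemma mLsmul (c : ℂ) (x : A) :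
    LinearMap.mulLeft ℂ (c • x) = c • LinearMap.mulLeft ℂ x :=
  LinearMap.ext fun z => smul_mul_assoc c x z

lemma mLsub (x y : A) :
    LinearMap.mulLeft ℂ (x - y) = LinearMap.mulLeft ℂ x - LinearMap.mulLeft ℂ y :=
  LinearMap.ext fun z => sub_mul x y z

lemma mLone : LinearMap.mulLeft ℂ (1 : A) = 1 :=
  LinearMap.ext fun z => one_mul z

lemma mLsum {ι : Type*} (s : Finset ι) (f : ι → A) :
    LinearMap.mulLeft ℂ (∑ i ∈ s, f i) = ∑ i ∈ s, LinearMap.mulLeft ℂ (f i) :=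
  LinearMap.ext fun z => by simp [Finset.sum_mul]

end MLHelpers


set_option maxHeartbeats 2000000 in
theorem instanton_connection_curvature
    (θ : ℝ)
    (A : Type*) [Ring A] [Algebra ℂ A]
    (𝒜 : ℤ × ℤ → Submodule ℂ A) [GradedAlgebra 𝒜]
    -- generators `b_μ` of the coinvariant subalgebra `O(S^4_θ)` (`b_μ* = b_{−μ}`)
    (b : ℤ × ℤ → A)
    (hb : ∀ μ ∈ V, b μ ∈ 𝒜 (dbl μ))
    (hcomm : ∀ μ ∈ V, ∀ ν ∈ V, b μ * b ν = q θ μ ν • (b ν * b μ))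
    (hsph : ∑ μ ∈ V, b (-μ) * b μ = 1)
    -- the `O(SU(2))`-equivariant braided derivations `L_{μ,ν}` of `O(S^7_θ)`
    (L : ℤ × ℤ → ℤ × ℤ → Module.End ℂ A)
    (hanti : ∀ μ ∈ V, ∀ ν ∈ V, L μ ν = -(q θ μ ν) • L ν μ)
    (hLval : ∀ μ ∈ V, ∀ ν ∈ V, ∀ σ ∈ V,
      L μ ν (b σ) = (if σ = -ν then (1:ℂ) else 0) • b μ
        - q θ μ ν • ((if σ = -μ then (1:ℂ) else 0) • b ν))
    (hLeib : ∀ μ ∈ V, ∀ ν ∈ V, ∀ (m : ℤ × ℤ) (x y : A), x ∈ 𝒜 m →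
      L μ ν (x * y) = L μ ν x * y + Q7 θ (dbl μ + dbl ν) m • (x * L μ ν y))
    -- the `so_θ(5)` relations
    (hLrel : ∀ μ ∈ V, ∀ ν ∈ V, ∀ τ ∈ V, ∀ σ ∈ V,
      L μ ν ∘ₗ L τ σ - q θ (μ + ν) (τ + σ) • (L τ σ ∘ₗ L μ ν)
        = (if τ = -ν then (1:ℂ) else 0) • L μ σ
          - q θ μ ν • ((if τ = -μ then (1:ℂ) else 0) • L ν σ)
          - q θ τ σ • ((if σ = -ν then (1:ℂ) else 0) • L μ τ
              - q θ μ ν • ((if σ = -μ then (1:ℂ) else 0) • L ν τ)))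
    -- the horizontal lifts `ρ(T_ν) := Σ_μ b_μ* L_{μ,ν}`
    (rhoT : ℤ × ℤ → Module.End ℂ A)
    (hrho : ∀ ν, rhoT ν = ∑ μ ∈ V, (LinearMap.mulLeft ℂ (b (-μ))) ∘ₗ L μ ν)
    -- the vertical (gauge) generators `Y_{μ,ν}`
    (Y : ℤ × ℤ → ℤ × ℤ → Module.End ℂ A)
    (hYdef : ∀ μ ν, Y μ ν = ∑ γ ∈ V,
      (LinearMap.mulLeft ℂ (b (-γ))) ∘ₗ
        ((LinearMap.mulLeft ℂ (b γ)) ∘ₗ L μ ν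
          - q θ γ μ • ((LinearMap.mulLeft ℂ (b μ)) ∘ₗ L γ ν)
          + q θ (γ + μ) ν • ((LinearMap.mulLeft ℂ (b ν)) ∘ₗ L γ μ))) :
    -- (i) `[ρ(T_μ), ρ(T_ν)] = L_{μ,ν}`
    (∀ μ ∈ V, ∀ ν ∈ V,
      rhoT μ ∘ₗ rhoT ν - q θ μ ν • (rhoT ν ∘ₗ rhoT μ) = L μ ν) ∧
    -- (ii) `ω(L_{μ,ν}) = L_{μ,ν} − (b_μ ρ(T_ν) − λ^{2μ∧ν} b_ν ρ(T_μ)) = Y_{μ,ν}`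
    (∀ μ ∈ V, ∀ ν ∈ V,
      L μ ν - ((LinearMap.mulLeft ℂ (b μ)) ∘ₗ rhoT ν
          - q θ μ ν • ((LinearMap.mulLeft ℂ (b ν)) ∘ₗ rhoT μ)) = Y μ ν) ∧
    -- (iii) `−Ω(T_μ,T_ν) = −(ρ([T_μ,T_ν]) − [ρ(T_μ),ρ(T_ν)]) = Y_{μ,ν}`
    (∀ μ ∈ V, ∀ ν ∈ V,
      - (((LinearMap.mulLeft ℂ (b μ)) ∘ₗ rhoT ν
            - q θ μ ν • ((LinearMap.mulLeft ℂ (b ν)) ∘ₗ rhoT μ))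
          - (rhoT μ ∘ₗ rhoT ν - q θ μ ν • (rhoT ν ∘ₗ rhoT μ))) = Y μ ν) := by
  classical
  have hVneg := V_neg
  simp only [← Module.End.mul_eq_comp] at hLrel hYdef hrho ⊢
  have hq1 : ∀ {p r p' r' : ℤ × ℤ}, wedge p r + wedge p' r' = 0 →
      q θ p r * q θ p' r' = 1 := by
    intro p r p' r' h
    rw [q_eq_E, q_eq_E, E_mul, E_eq_one h]
  have hLb : ∀ γ ∈ V, ∀ μ' ∈ V, ∀ δ ∈ V,
      L γ μ' (b (-δ)) = (if δ = μ' then (1:ℂ) else 0) • b γ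
        - (q θ γ μ' * if δ = γ then (1:ℂ) else 0) • b μ' := by
    intro γ hγ μ' hμ' δ hδ
    rw [hLval γ hγ μ' hμ' (-δ) (hVneg δ hδ)]
    simp [neg_inj, smul_smul, mul_comm]
  have hUnit : ∀ W : Module.End ℂ A,
      (∑ γ ∈ V, LinearMap.mulLeft ℂ (b (-γ) * b γ) * W) = W := by
    intro W
    rw [← Finset.sum_mul, ← mLsum, hsph, mLone, one_mul]
  have hPull : ∀ τ ∈ V, ∀ ρ' : ℤ × ℤ,
      (∑ γ ∈ V, q θ γ τ • (LinearMap.mulLeft ℂ (b (-γ) * b τ) * L γ ρ'))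
        = LinearMap.mulLeft ℂ (b τ) * rhoT ρ' := by
    intro τ hτ ρ'
    rw [hrho ρ', Finset.mul_sum]
    refine Finset.sum_congr rfl fun γ hγ => ?_
    rw [hcomm (-γ) (hVneg γ hγ) τ hτ, mLsmul, smul_mul_assoc, smul_smul,
      hq1 (by simp only [wedge, Prod.fst_neg, Prod.snd_neg, Prod.fst_add, Prod.snd_add]; ring), one_smul, mLmul, mul_assoc]
  have hKey : ∀ μ' ∈ V, ∀ ν' ∈ V, ∀ γ ∈ V, ∀ δ ∈ V,
      (LinearMap.mulLeft ℂ (b (-γ)) * L γ μ') * (LinearMap.mulLeft ℂ (b (-δ)) * L δ ν')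
        = LinearMap.mulLeft ℂ (b (-γ) * L γ μ' (b (-δ))) * L δ ν'
          + q θ (γ + μ') (-δ) •
              (LinearMap.mulLeft ℂ (b (-γ) * b (-δ)) * (L γ μ' * L δ ν')) := by
    intro μ' hμ' ν' hν' γ hγ δ hδ
    apply LinearMap.ext; intro y
    have h := hLeib γ hγ μ' hμ' (dbl (-δ)) (b (-δ)) (L δ ν' y) (hb (-δ) (hVneg δ hδ))
    rw [Q7_dbl] at h
    simp only [Module.End.mul_apply, LinearMap.add_apply, LinearMap.smul_apply,
      LinearMap.mulLeft_apply]
    rw [h]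
    simp [mul_add, mul_smul_comm, mul_assoc]
  have hExp : ∀ μ' ∈ V, ∀ ν' ∈ V,
      rhoT μ' * rhoT ν'
        = (L μ' ν' - LinearMap.mulLeft ℂ (b μ') * rhoT ν')
          + ∑ γ ∈ V, ∑ δ ∈ V, q θ (γ + μ') (-δ) •
              (LinearMap.mulLeft ℂ (b (-γ) * b (-δ)) * (L γ μ' * L δ ν')) := by
    intro μ' hμ' ν' hν'
    calc rhoT μ' * rhoT ν'
        = ∑ γ ∈ V, ∑ δ ∈ V,
          (LinearMap.mulLeft ℂ (b (-γ)) * L γ μ') * (LinearMap.mulLeft ℂ (b (-δ)) * L δ ν') := by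
          rw [hrho μ', hrho ν', Finset.sum_mul_sum]
      _ = ∑ γ ∈ V, ∑ δ ∈ V,
            (LinearMap.mulLeft ℂ (b (-γ) * L γ μ' (b (-δ))) * L δ ν'
              + q θ (γ + μ') (-δ) •
                  (LinearMap.mulLeft ℂ (b (-γ) * b (-δ)) * (L γ μ' * L δ ν'))) :=
          Finset.sum_congr rfl fun γ hγ => Finset.sum_congr rfl fun δ hδ =>
            hKey μ' hμ' ν' hν' γ hγ δ hδ
      _ = (∑ γ ∈ V, ∑ δ ∈ V, LinearMap.mulLeft ℂ (b (-γ) * L γ μ' (b (-δ))) * L δ ν')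
            + ∑ γ ∈ V, ∑ δ ∈ V, q θ (γ + μ') (-δ) •
                (LinearMap.mulLeft ℂ (b (-γ) * b (-δ)) * (L γ μ' * L δ ν')) := by
          simp only [Finset.sum_add_distrib]
      _ = (L μ' ν' - LinearMap.mulLeft ℂ (b μ') * rhoT ν')
            + ∑ γ ∈ V, ∑ δ ∈ V, q θ (γ + μ') (-δ) •
                (LinearMap.mulLeft ℂ (b (-γ) * b (-δ)) * (L γ μ' * L δ ν')) := by
          congr 1
          calc ∑ γ ∈ V, ∑ δ ∈ V, LinearMap.mulLeft ℂ (b (-γ) * L γ μ' (b (-δ))) * L δ ν'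
              = ∑ γ ∈ V, (LinearMap.mulLeft ℂ (b (-γ) * b γ) * L μ' ν'
                  - q θ γ μ' • (LinearMap.mulLeft ℂ (b (-γ) * b μ') * L γ ν')) := by
                refine Finset.sum_congr rfl fun γ hγ => ?_
                calc ∑ δ ∈ V, LinearMap.mulLeft ℂ (b (-γ) * L γ μ' (b (-δ))) * L δ ν'
                    = ∑ δ ∈ V,
                        ((if δ = μ' then (1:ℂ) else 0) •
                            (LinearMap.mulLeft ℂ (b (-γ) * b γ) * L δ ν')
                          - (q θ γ μ' * if δ = γ then (1:ℂ) else 0) •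
                              (LinearMap.mulLeft ℂ (b (-γ) * b μ') * L δ ν')) := by
                      refine Finset.sum_congr rfl fun δ hδ => ?_
                      rw [hLb γ hγ μ' hμ' δ hδ]
                      simp only [mul_sub, mul_smul_comm, mLsub, mLsmul, sub_mul,
                        smul_mul_assoc]
                  _ = LinearMap.mulLeft ℂ (b (-γ) * b γ) * L μ' ν'
                        - q θ γ μ' • (LinearMap.mulLeft ℂ (b (-γ) * b μ') * L γ ν') := by
                      rw [Finset.sum_sub_distrib,
                        sum_delta V hμ' (fun δ => LinearMap.mulLeft ℂ (b (-γ) * b γ) * L δ ν'),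
                        sum_delta_mul V hγ (fun _ => q θ γ μ')
                          (fun δ => LinearMap.mulLeft ℂ (b (-γ) * b μ') * L δ ν')]
            _ = L μ' ν' - LinearMap.mulLeft ℂ (b μ') * rhoT ν' := by
                rw [Finset.sum_sub_distrib, hUnit, hPull μ' hμ' ν']
  -- part (ii)
  have part2 : ∀ μ ∈ V, ∀ ν ∈ V,
      L μ ν - (LinearMap.mulLeft ℂ (b μ) * rhoT ν
          - q θ μ ν • (LinearMap.mulLeft ℂ (b ν) * rhoT μ)) = Y μ ν := by
    intro μ hμ ν hν
    rw [hYdef μ ν]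
    have hstep : ∀ γ ∈ V,
        LinearMap.mulLeft ℂ (b (-γ)) *
            (LinearMap.mulLeft ℂ (b γ) * L μ ν
              - q θ γ μ • (LinearMap.mulLeft ℂ (b μ) * L γ ν)
              + q θ (γ + μ) ν • (LinearMap.mulLeft ℂ (b ν) * L γ μ))
          = LinearMap.mulLeft ℂ (b (-γ) * b γ) * L μ ν
            - q θ γ μ • (LinearMap.mulLeft ℂ (b (-γ) * b μ) * L γ ν)
            + q θ μ ν • (q θ γ ν • (LinearMap.mulLeft ℂ (b (-γ) * b ν) * L γ μ)) := by
      intro γ hγ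
      rw [mul_add, mul_sub]
      simp only [mul_smul_comm, ← mul_assoc, ← mLmul]
      congr 1
      rw [smul_smul, q_eq_E, q_eq_E, q_eq_E, E_mul]
      congr 2
      simp only [wedge, Prod.fst_neg, Prod.snd_neg, Prod.fst_add, Prod.snd_add]; ring
    rw [Finset.sum_congr rfl hstep]
    simp only [Finset.sum_add_distrib, Finset.sum_sub_distrib, ← Finset.smul_sum]
    rw [hUnit, hPull μ hμ ν, hPull ν hν μ]
    abel
  -- part (i)
  have part1 : ∀ μ ∈ V, ∀ ν ∈ V,
      rhoT μ * rhoT ν - q θ μ ν • (rhoT ν * rhoT μ) = L μ ν := by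
    intro μ hμ ν hν
    have h2 : q θ μ ν • (∑ γ ∈ V, ∑ δ ∈ V, q θ (γ + ν) (-δ) •
            (LinearMap.mulLeft ℂ (b (-γ) * b (-δ)) * (L γ ν * L δ μ)))
        = ∑ γ ∈ V, ∑ δ ∈ V, q θ (γ + μ) (-δ) • (q θ (γ + μ) (δ + ν) •
            (LinearMap.mulLeft ℂ (b (-γ) * b (-δ)) * (L δ ν * L γ μ))) := by
      rw [Finset.sum_comm, Finset.smul_sum]
      refine Finset.sum_congr rfl fun γ hγ => ?_
      rw [Finset.smul_sum]
      refine Finset.sum_congr rfl fun δ hδ => ?_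
      rw [hcomm (-δ) (hVneg δ hδ) (-γ) (hVneg γ hγ), mLsmul, smul_mul_assoc]
      simp only [smul_smul]
      congr 1
      simp only [q_eq_E, mul_assoc, E_mul]
      congr 1
      simp only [wedge, Prod.fst_neg, Prod.snd_neg, Prod.fst_add, Prod.snd_add]; ring
    have hTerm : ∀ γ ∈ V, ∀ δ ∈ V,
        q θ (γ + μ) (-δ) •
            (LinearMap.mulLeft ℂ (b (-γ) * b (-δ)) * (L γ μ * L δ ν)
              - q θ (γ + μ) (δ + ν) •
                  (LinearMap.mulLeft ℂ (b (-γ) * b (-δ)) * (L δ ν * L γ μ)))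
          = (q θ (γ + μ) (-δ) * if δ = -μ then (1:ℂ) else 0) •
                (LinearMap.mulLeft ℂ (b (-γ) * b (-δ)) * L γ ν)
              - ((q θ (γ + μ) (-δ) * q θ γ μ) * if δ = -γ then (1:ℂ) else 0) •
                  (LinearMap.mulLeft ℂ (b (-γ) * b (-δ)) * L μ ν)
              - ((q θ (γ + μ) (-δ) * q θ δ ν) * if ν = -μ then (1:ℂ) else 0) •
                  (LinearMap.mulLeft ℂ (b (-γ) * b (-δ)) * L γ δ)
              + (((q θ (γ + μ) (-δ) * q θ δ ν) * q θ γ μ) * if γ = -ν then (1:ℂ) else 0) •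
                  (LinearMap.mulLeft ℂ (b (-γ) * b (-δ)) * L μ δ) := by
      intro γ hγ δ hδ
      have hcnd : (ν = -γ) = (γ = -ν) :=
        propext ⟨fun h => by rw [h, neg_neg], fun h => by rw [h, neg_neg]⟩
      have hr := hLrel γ hγ μ hμ δ hδ ν hν
      rw [← mul_smul_comm, ← mul_sub, hr]
      simp only [hcnd]
      simp only [mul_sub, mul_smul_comm, smul_sub, smul_smul]
      module
    have hD1 : (∑ γ ∈ V, ∑ δ ∈ V, (q θ (γ + μ) (-δ) * if δ = -μ then (1:ℂ) else 0) •
          (LinearMap.mulLeft ℂ (b (-γ) * b (-δ)) * L γ ν))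
        = LinearMap.mulLeft ℂ (b μ) * rhoT ν := by
      have hin : ∀ γ ∈ V, (∑ δ ∈ V, (q θ (γ + μ) (-δ) * if δ = -μ then (1:ℂ) else 0) •
            (LinearMap.mulLeft ℂ (b (-γ) * b (-δ)) * L γ ν))
          = q θ γ μ • (LinearMap.mulLeft ℂ (b (-γ) * b μ) * L γ ν) := by
        intro γ hγ
        rw [sum_delta_mul V (hVneg μ hμ) (fun δ => q θ (γ + μ) (-δ))
          (fun δ => LinearMap.mulLeft ℂ (b (-γ) * b (-δ)) * L γ ν)]
        simp only [neg_neg]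
        congr 1
        exact q_congr (by simp only [wedge, Prod.fst_neg, Prod.snd_neg, Prod.fst_add, Prod.snd_add]; ring)
      rw [Finset.sum_congr rfl hin, hPull μ hμ ν]
    have hD2 : (∑ γ ∈ V, ∑ δ ∈ V, ((q θ (γ + μ) (-δ) * q θ γ μ) * if δ = -γ then (1:ℂ) else 0) •
          (LinearMap.mulLeft ℂ (b (-γ) * b (-δ)) * L μ ν)) = L μ ν := by
      have hin : ∀ γ ∈ V, (∑ δ ∈ V, ((q θ (γ + μ) (-δ) * q θ γ μ) * if δ = -γ then (1:ℂ) else 0) •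
            (LinearMap.mulLeft ℂ (b (-γ) * b (-δ)) * L μ ν))
          = LinearMap.mulLeft ℂ (b (-γ) * b γ) * L μ ν := by
        intro γ hγ
        rw [sum_delta_mul V (hVneg γ hγ) (fun δ => q θ (γ + μ) (-δ) * q θ γ μ)
          (fun δ => LinearMap.mulLeft ℂ (b (-γ) * b (-δ)) * L μ ν)]
        simp only [neg_neg]
        rw [hq1 (by simp only [wedge, Prod.fst_neg, Prod.snd_neg, Prod.fst_add, Prod.snd_add]; ring), one_smul]
      rw [Finset.sum_congr rfl hin, hUnit]
    have hD3 : (∑ γ ∈ V, ∑ δ ∈ V, ((q θ (γ + μ) (-δ) * q θ δ ν) * if ν = -μ then (1:ℂ) else 0) •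
          (LinearMap.mulLeft ℂ (b (-γ) * b (-δ)) * L γ δ)) = 0 := by
      by_cases hc : ν = -μ
      · subst hc
        have hone : (if (-μ : ℤ × ℤ) = -μ then (1:ℂ) else 0) = 1 := if_pos rfl
        simp only [hone, eq_self_iff_true, if_true, mul_one]
        refine sum_antisym V
          (fun a c => (q θ (a + μ) (-c) * q θ c (-μ)) •
            (LinearMap.mulLeft ℂ (b (-a) * b (-c)) * L a c)) ?_
        intro a ha c hcV
        rw [hcomm (-c) (hVneg c hcV) (-a) (hVneg a ha), hanti c hcV a ha, mLsmul]
        simp only [smul_mul_assoc, mul_smul_comm, smul_smul, smul_neg, mul_neg, neg_smul,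
          neg_mul]
        rw [neg_inj]
        congr 1
        simp only [q_eq_E, mul_assoc, E_mul]
        congr 1
        simp only [wedge, Prod.fst_neg, Prod.snd_neg, Prod.fst_add, Prod.snd_add]; ring
      · simp [if_neg hc]
    have hD4 : (∑ γ ∈ V, ∑ δ ∈ V,
          (((q θ (γ + μ) (-δ) * q θ δ ν) * q θ γ μ) * if γ = -ν then (1:ℂ) else 0) •
            (LinearMap.mulLeft ℂ (b (-γ) * b (-δ)) * L μ δ))
        = -(q θ μ ν • (LinearMap.mulLeft ℂ (b ν) * rhoT μ)) := by
      rw [Finset.sum_comm]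
      have hin : ∀ δ ∈ V, (∑ γ ∈ V,
            (((q θ (γ + μ) (-δ) * q θ δ ν) * q θ γ μ) * if γ = -ν then (1:ℂ) else 0) •
              (LinearMap.mulLeft ℂ (b (-γ) * b (-δ)) * L μ δ))
          = -(q θ μ ν • (LinearMap.mulLeft ℂ (b ν) *
              (LinearMap.mulLeft ℂ (b (-δ)) * L δ μ))) := by
        intro δ hδ
        rw [sum_delta_mul V (hVneg ν hν)
          (fun γ => (q θ (γ + μ) (-δ) * q θ δ ν) * q θ γ μ)
          (fun γ => LinearMap.mulLeft ℂ (b (-γ) * b (-δ)) * L μ δ)]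
        simp only [neg_neg]
        rw [hanti μ hμ δ hδ, mLmul, mul_assoc]
        simp only [mul_smul_comm, smul_smul, smul_neg, mul_neg, neg_smul, neg_mul]
        rw [neg_inj]
        congr 1
        simp only [q_eq_E, mul_assoc, E_mul]
        congr 1
        simp only [wedge, Prod.fst_neg, Prod.snd_neg, Prod.fst_add, Prod.snd_add]; ring
      rw [Finset.sum_congr rfl hin]
      rw [Finset.sum_neg_distrib, ← Finset.smul_sum, ← Finset.mul_sum, ← hrho μ]
    have hqL : q θ μ ν • L ν μ = -(L μ ν) := by
      rw [hanti μ hμ ν hν]; ext x; simp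
    rw [hExp μ hμ ν hν, hExp ν hν μ hμ, smul_add, h2, smul_sub, hqL]
    have hBB : (∑ γ ∈ V, ∑ δ ∈ V, q θ (γ + μ) (-δ) •
            (LinearMap.mulLeft ℂ (b (-γ) * b (-δ)) * (L γ μ * L δ ν)))
        - (∑ γ ∈ V, ∑ δ ∈ V, q θ (γ + μ) (-δ) • (q θ (γ + μ) (δ + ν) •
            (LinearMap.mulLeft ℂ (b (-γ) * b (-δ)) * (L δ ν * L γ μ))))
        = LinearMap.mulLeft ℂ (b μ) * rhoT ν - L μ ν
          - q θ μ ν • (LinearMap.mulLeft ℂ (b ν) * rhoT μ) := by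
      calc (∑ γ ∈ V, ∑ δ ∈ V, q θ (γ + μ) (-δ) •
              (LinearMap.mulLeft ℂ (b (-γ) * b (-δ)) * (L γ μ * L δ ν)))
          - (∑ γ ∈ V, ∑ δ ∈ V, q θ (γ + μ) (-δ) • (q θ (γ + μ) (δ + ν) •
              (LinearMap.mulLeft ℂ (b (-γ) * b (-δ)) * (L δ ν * L γ μ))))
          = ∑ γ ∈ V, ∑ δ ∈ V, q θ (γ + μ) (-δ) •
              (LinearMap.mulLeft ℂ (b (-γ) * b (-δ)) * (L γ μ * L δ ν)
                - q θ (γ + μ) (δ + ν) •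
                    (LinearMap.mulLeft ℂ (b (-γ) * b (-δ)) * (L δ ν * L γ μ))) := by
            rw [← Finset.sum_sub_distrib]
            refine Finset.sum_congr rfl fun γ _ => ?_
            rw [← Finset.sum_sub_distrib]
            exact Finset.sum_congr rfl fun δ _ => (smul_sub _ _ _).symm
        _ = ∑ γ ∈ V, ∑ δ ∈ V,
              ((q θ (γ + μ) (-δ) * if δ = -μ then (1:ℂ) else 0) •
                  (LinearMap.mulLeft ℂ (b (-γ) * b (-δ)) * L γ ν)
                - ((q θ (γ + μ) (-δ) * q θ γ μ) * if δ = -γ then (1:ℂ) else 0) •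
                    (LinearMap.mulLeft ℂ (b (-γ) * b (-δ)) * L μ ν)
                - ((q θ (γ + μ) (-δ) * q θ δ ν) * if ν = -μ then (1:ℂ) else 0) •
                    (LinearMap.mulLeft ℂ (b (-γ) * b (-δ)) * L γ δ)
                + (((q θ (γ + μ) (-δ) * q θ δ ν) * q θ γ μ) * if γ = -ν then (1:ℂ) else 0) •
                    (LinearMap.mulLeft ℂ (b (-γ) * b (-δ)) * L μ δ)) :=
            Finset.sum_congr rfl fun γ hγ => Finset.sum_congr rfl fun δ hδ =>
              hTerm γ hγ δ hδ
        _ = LinearMap.mulLeft ℂ (b μ) * rhoT ν - L μ ν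
              - q θ μ ν • (LinearMap.mulLeft ℂ (b ν) * rhoT μ) := by
            simp only [Finset.sum_add_distrib, Finset.sum_sub_distrib]
            rw [hD1, hD2, hD3, hD4]
            abel
    rw [sub_eq_iff_eq_add] at hBB
    rw [hBB]
    abel
  exact ⟨part1, part2, fun μ hμ ν hν => by
    rw [neg_sub, part1 μ hμ ν hν]; exact part2 μ hμ ν hν⟩



end Statement9
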